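/- Let T be a tree with cost c that is k-up-modular, let a > 0 be a threshold, let H be the set of heavy modules with respect to a, and let X contain exactly one vertex from each heavy module. Let Y = X ∪ {v ∈ V(T⟨X⟩) : deg_{T⟨X⟩}(v) ≥ 3}, and let Z be obtained from Y by adding, for each pair u, v ∈ Y whose connecting path in T is nonempty and internally disjoint from Y, one vertex of that path. Then |Z| ≤ 4k − 3. -/

import Mathlib

open SimpleGraph

/-- A rooted decision tree: a query vertex together with a list of subtrees. -/
inductive DT (V : Type) : Type
  | node : V → List (DT V) → DT V

namespace DT

variable {V : Type} [DecidableEq V]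

/-- The set of vertices (queries) appearing in a decision tree. -/
def verts : DT V → Finset V
  | .node q ch => insert q ((ch.attach.map fun d => verts d.1).foldr (· ∪ ·) ∅)
decreasing_by simp only [DT.node.sizeOf_spec]; have := List.sizeOf_lt_of_mem d.2; omega

/-- The depth of a decision tree: the maximum number of queries on a
root-to-leaf path. -/
def depth : DT V → ℕ
  | .node _ ch => 1 + ((ch.attach.map fun d => depth d.1).foldr max 0)
decreasing_by simp only [DT.node.sizeOf_spec]; have := List.sizeOf_lt_of_mem d.2; omega

/-- Total cost of the queries on the path from the root to target `x`. -/
def costTo (c : V → ℝ) : DT V → V → ℝ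
  | .node q ch, x =>
      c q + if x = q then 0
        else ((ch.attach.map fun d => if x ∈ verts d.1 then costTo c d.1 x else 0).sum)
decreasing_by simp only [DT.node.sizeOf_spec]; have := List.sizeOf_lt_of_mem d.2; omega

/-- `u` is a (weak) ancestor of `x` in the decision tree: `x` lies in the
subtree rooted at the node querying `u`. -/
def Ancestor : DT V → V → V → Prop
  | .node q ch, u, x =>
      (u = q ∧ x ∈ verts (DT.node q ch)) ∨ ∃ d ∈ ch.attach, Ancestor d.1 u x
decreasing_by simp only [DT.node.sizeOf_spec]; have := List.sizeOf_lt_of_mem d.2; omega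

/-- Validity of a decision tree with respect to a graph `G` and a candidate
set `S`: the root query belongs to `S`, and the children correspond exactly to
the distinct connected components of the induced graph on `S` minus the query. -/
def IsValidOn (G : SimpleGraph V) : DT V → Finset V → Prop
  | .node q ch, S =>
      q ∈ S ∧
      (∀ d ∈ ch, (verts d) ⊆ S.erase q ∧ (verts d).Nonempty ∧
        ((G.induce (verts d : Set V)).Connected) ∧
        (∀ u ∈ verts d, ∀ v ∈ S.erase q, v ∉ verts d → ¬ G.Adj u v)) ∧
      (∀ v ∈ S.erase q, ∃ d ∈ ch, v ∈ verts d) ∧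
      (∀ d ∈ ch, ∀ d' ∈ ch, d ≠ d' → Disjoint (verts d) (verts d')) ∧
      (∀ d ∈ ch.attach, IsValidOn G d.1 (verts d.1))
termination_by D _ => sizeOf D
decreasing_by simp only [DT.node.sizeOf_spec]; have := List.sizeOf_lt_of_mem d.2; omega

/-- `D` is a (complete) decision tree for the tree `G` on a finite vertex set. -/
def IsDecisionTree [Fintype V] (G : SimpleGraph V) (D : DT V) : Prop :=
  IsValidOn G D Finset.univ

/-- A partial decision tree: a prefix of a decision tree (same root, each
child is a prefix of a corresponding child of the full tree). -/
def IsPrefixOf : DT V → DT V → Prop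
  | .node q' ch', .node q ch =>
      q' = q ∧ ∀ d' ∈ ch'.attach, ∃ d ∈ ch, IsPrefixOf d'.1 d
termination_by D _ => sizeOf D
decreasing_by simp only [DT.node.sizeOf_spec]; have := List.sizeOf_lt_of_mem d'.2; omega

/-- Worst-case total query cost of a decision tree. -/
noncomputable def COST (c : V → ℝ) (D : DT V) : ℝ :=
  sSup { r | ∃ x ∈ verts D, costTo c D x = r }

/-- Optimal worst-case cost of searching in the tree `G` with query costs `c`. -/
noncomputable def OPT [Fintype V] (G : SimpleGraph V) (c : V → ℝ) : ℝ :=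
  sInf { r | ∃ D : DT V, IsDecisionTree G D ∧ COST c D = r }

end DT

/-- `H` is a heavy module of `G` w.r.t. threshold `t`: a maximal vertex set
inducing a connected subgraph all of whose vertices have cost exceeding `t`. -/
def IsHeavyModule {V : Type} (G : SimpleGraph V) (c : V → ℝ) (t : ℝ) (H : Set V) : Prop :=
  (G.induce H).Connected ∧ (∀ v ∈ H, t < c v) ∧
    ∀ H' : Set V, H ⊆ H' → (G.induce H').Connected → (∀ v ∈ H', t < c v) → H' = H

/-- The number `k(T,c,t)` of heavy modules with respect to threshold `t`. -/
noncomputable def numHeavy {V : Type} (G : SimpleGraph V) (c : V → ℝ) (t : ℝ) : ℕ :=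
  {H : Set V | IsHeavyModule G c t H}.ncard

/-- The up-modularity parameter `k(T,c)`: the maximum over all thresholds
`t ≥ 0` of the number of heavy modules. -/
noncomputable def kval {V : Type} (G : SimpleGraph V) (c : V → ℝ) : ℕ :=
  sSup {m : ℕ | ∃ t : ℝ, 0 ≤ t ∧ m = numHeavy G c t}

/-- The vertex set of the Steiner tree `T⟨X⟩`: all vertices lying on a path
between two vertices of `X`. -/
def SteinerSet {V : Type} (G : SimpleGraph V) (X : Set V) : Set V :=
  {v | ∃ u ∈ X, ∃ w ∈ X, ∃ p : G.Walk u w, p.IsPath ∧ v ∈ p.support}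

/-- The internal vertices of a walk (its support without the two endpoints). -/
def InternalOf {V : Type} {u v : V} (G : SimpleGraph V) (p : G.Walk u v) : List V :=
  p.support.tail.dropLast


section Stmt12Aux

set_option linter.unusedSectionVars false

variable {V : Type} [DecidableEq V] {G : SimpleGraph V}

/-- The unique path between two vertices of a tree. -/
noncomputable def tpath (hG : G.IsTree) (u v : V) : G.Walk u v :=
  (hG.existsUnique_path u v).exists.choose

lemma tpath_isPath (hG : G.IsTree) (u v : V) : (tpath hG u v).IsPath :=
  (hG.existsUnique_path u v).exists.choose_spec

lemma tpath_eq (hG : G.IsTree) {u v : V} {q : G.Walk u v} (hq : q.IsPath) :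
    q = tpath hG u v :=
  (hG.existsUnique_path u v).unique hq (tpath_isPath hG u v)

lemma exists_adj_of_ne {a b : V} (w : G.Walk a b) (h : a ≠ b) :
    ∃ n, G.Adj a n ∧ n ∈ w.support ∧ n ≠ a := by
  cases w with
  | nil => exact absurd rfl h
  | cons h' p =>
    exact ⟨_, h', by simp [Walk.support_cons, p.start_mem_support], h'.ne'⟩

lemma mem_dropLast_support {u v x : V} (p : G.Walk u v) (hx : x ∈ p.support)
    (hxv : x ≠ v) : x ∈ p.support.dropLast := by
  induction p with
  | nil => simp at hx; exact absurd hx hxv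
  | cons h' p ih =>
    rw [Walk.support_cons] at hx ⊢
    rw [List.dropLast_cons_of_ne_nil p.support_ne_nil]
    rcases List.mem_cons.mp hx with rfl | hx'
    · exact List.mem_cons_self
    · exact List.mem_cons_of_mem _ (ih hx' hxv)

lemma mem_internal {u v x : V} {p : G.Walk u v} (hx : x ∈ p.support)
    (hxu : x ≠ u) (hxv : x ≠ v) : x ∈ InternalOf G p := by
  cases p with
  | nil => simp at hx; exact absurd hx hxu
  | cons h' p =>
    show x ∈ (Walk.cons h' p).support.tail.dropLast
    rw [Walk.support_cons] at hx ⊢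
    rw [List.tail_cons]
    rcases List.mem_cons.mp hx with rfl | hx'
    · exact absurd rfl hxu
    · exact mem_dropLast_support p hx' hxv

lemma med_aux (hG : G.IsTree) :
    ∀ (n : ℕ) ⦃u v r : V⦄ (p : G.Walk u v) (q : G.Walk u r),
      p.length ≤ n → p.IsPath → q.IsPath →
      ∃ (m : V) (p1 : G.Walk u m) (p2 : G.Walk m v) (p3 : G.Walk m r),
        p = p1.append p2 ∧ q = p1.append p3 ∧
        ∀ x, x ∈ p2.support → x ∈ p3.support → x = m := by
  intro n
  induction n with
  | zero =>
    intro u v r p q hl hp hq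
    refine ⟨u, Walk.nil, p, q, (Walk.nil_append p).symm, (Walk.nil_append q).symm, ?_⟩
    intro x hxp _
    have hnil : p.Nil := Walk.nil_iff_length_eq.2 (Nat.le_zero.mp hl)
    have huv : u = v := hnil.eq
    subst huv
    rw [Walk.isPath_iff_eq_nil.mp hp] at hxp
    simpa using hxp
  | succ n ih =>
    intro u v r p q hl hp hq
    by_cases hc : ∃ x, x ∈ p.support ∧ x ≠ u ∧ x ∈ q.support
    · obtain ⟨x, hxp, hxu, hxq⟩ := hc
      have e1 : q.takeUntil x hxq = p.takeUntil x hxp :=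
        (hG.existsUnique_path u x).unique (hq.takeUntil hxq) (hp.takeUntil hxp)
      have hlen : (p.dropUntil x hxp).length ≤ n := by
        have h2 : (p.takeUntil x hxp).length + (p.dropUntil x hxp).length = p.length := by
          rw [← Walk.length_append, Walk.take_spec]
        have h3 : (p.takeUntil x hxp).length ≠ 0 := by
          intro h0
          exact hxu ((Walk.nil_iff_length_eq.2 h0).eq).symm
        omega
      obtain ⟨m, s1, s2, s3, h1, h2, h3⟩ :=
        ih (p.dropUntil x hxp) (q.dropUntil x hxq) hlen (hp.dropUntil hxp) (hq.dropUntil hxq)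
      refine ⟨m, (p.takeUntil x hxp).append s1, s2, s3, ?_, ?_, h3⟩
      · rw [← Walk.append_assoc, ← h1]
        exact (p.take_spec hxp).symm
      · rw [← Walk.append_assoc, ← h2, ← e1]
        exact (q.take_spec hxq).symm
    · refine ⟨u, Walk.nil, p, q, (Walk.nil_append p).symm, (Walk.nil_append q).symm, ?_⟩
      intro x hxp hxq
      by_contra hne
      exact hc ⟨x, hxp, hne, hxq⟩

lemma comp_aux (hG : G.IsTree) {a b o1 o2 : V} (q : G.Walk a b) (hq : q.IsPath)
    (h1 : o1 ∈ q.support) (h2 : o2 ∈ q.support) :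
    o1 ∈ (q.takeUntil o2 h2).support ∨ o2 ∈ (q.takeUntil o1 h1).support := by
  by_cases hx : o2 ∈ (q.takeUntil o1 h1).support
  · exact Or.inr hx
  · left
    have hd : o2 ∈ (q.dropUntil o1 h1).support := by
      have hts := q.take_spec h1
      rw [← hts, Walk.mem_support_append_iff] at h2
      exact h2.resolve_left hx
    have hWq : ((q.takeUntil o1 h1).append ((q.dropUntil o1 h1).takeUntil o2 hd)).append
        ((q.dropUntil o1 h1).dropUntil o2 hd) = q := by
      rw [← Walk.append_assoc, Walk.take_spec, Walk.take_spec]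
    have hWp : ((q.takeUntil o1 h1).append ((q.dropUntil o1 h1).takeUntil o2 hd)).IsPath := by
      rw [← hWq] at hq
      exact hq.of_append_left
    have he := tpath_eq hG hWp
    have he2 := tpath_eq hG (hq.takeUntil h2)
    rw [he2, ← he, Walk.mem_support_append_iff]
    exact Or.inl (Walk.end_mem_support _)

lemma steiner_of_mem_path {X : Set V} {x1 x2 : V} (h1 : x1 ∈ X) (h2 : x2 ∈ X)
    {pa : G.Walk x1 x2} (hpa : pa.IsPath) : ∀ x ∈ pa.support, x ∈ SteinerSet G X :=
  fun x hx => ⟨x1, h1, x2, h2, pa, hpa, hx⟩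

lemma X_subset_steiner (X : Set V) : X ⊆ SteinerSet G X :=
  fun x hx => ⟨x, hx, x, hx, Walk.nil, Walk.IsPath.nil, by simp⟩

lemma steiner_path_closed (hG : G.IsTree) {X : Set V} {u v : V}
    (hu : u ∈ SteinerSet G X) (hv : v ∈ SteinerSet G X) :
    ∀ x ∈ (tpath hG u v).support, x ∈ SteinerSet G X := by
  obtain ⟨x1, hx1, x2, hx2, pa, hpa, hupa⟩ := hu
  obtain ⟨x3, hx3, x4, hx4, pb, hpb, hvpb⟩ := hv
  set W := ((pa.takeUntil u hupa).reverse.append (tpath hG x1 x3)).append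
    (pb.takeUntil v hvpb) with hWdef
  have hWb : W.bypass = tpath hG u v := tpath_eq hG W.bypass_isPath
  intro x hx
  rw [← hWb] at hx
  have hx' : x ∈ W.support := W.support_bypass_subset hx
  rw [hWdef, Walk.mem_support_append_iff, Walk.mem_support_append_iff] at hx'
  rcases hx' with (h | h) | h
  · rw [Walk.support_reverse, List.mem_reverse] at h
    exact steiner_of_mem_path hx1 hx2 hpa x (pa.support_takeUntil_subset hupa h)
  · exact steiner_of_mem_path hx1 hx3 (tpath_isPath hG x1 x3) x h
  · exact steiner_of_mem_path hx3 hx4 hpb x (pb.support_takeUntil_subset hvpb h)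

end Stmt12Aux

section Stmt12Aux2

set_option linter.unusedSectionVars false

variable {V : Type} [DecidableEq V] {G : SimpleGraph V}

lemma md_lemma [Finite V] (hG : G.IsTree) (X Y : Set V)
    (hY : Y = X ∪ {v | v ∈ SteinerSet G X ∧
      3 ≤ {u | u ∈ SteinerSet G X ∧ G.Adj v u}.ncard})
    {u v rr : V} (hu : u ∈ Y) (hv : v ∈ Y) (hr : rr ∈ Y) (huv : u ≠ v)
    (hint : ∀ x ∈ (tpath hG u v).support, x ≠ u → x ≠ v → x ∉ Y) :
    v ∈ (tpath hG u rr).support ∨ u ∈ (tpath hG v rr).support := by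
  have hYS : Y ⊆ SteinerSet G X := by
    rw [hY]; rintro y (h | h)
    · exact X_subset_steiner X h
    · exact h.1
  set p := tpath hG u v with hpdef
  set q := tpath hG u rr with hqdef
  obtain ⟨m, p1, p2, p3, h1, h2, h3⟩ :=
    med_aux hG p.length p q le_rfl (tpath_isPath hG u v) (tpath_isPath hG u rr)
  have hp : p.IsPath := tpath_isPath hG u v
  have hq : q.IsPath := tpath_isPath hG u rr
  have hp1 : p1.IsPath := by rw [h1] at hp; exact hp.of_append_left
  have hp2 : p2.IsPath := by rw [h1] at hp; exact hp.of_append_right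
  have hp3 : p3.IsPath := by rw [h2] at hq; exact hq.of_append_right
  have hmp : m ∈ p.support := by
    rw [h1, Walk.mem_support_append_iff]; exact Or.inl p1.end_mem_support
  by_cases hmv : m = v
  · left
    rw [h2, Walk.mem_support_append_iff]
    exact Or.inl (hmv ▸ p1.end_mem_support)
  · -- build the path from v to rr through m
    have hWpath : (p2.reverse.append p3).IsPath := by
      rw [Walk.isPath_def, Walk.support_append, Walk.support_reverse]
      have hnd2 : p2.support.reverse.Nodup := List.nodup_reverse.mpr hp2.support_nodup
      have h3s := hp3.support_nodup
      rw [p3.support_eq_cons] at h3s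
      rcases List.nodup_cons.mp h3s with ⟨hm3, hnd3⟩
      refine List.nodup_append'.mpr ⟨hnd2, hnd3, ?_⟩
      intro z hz1 hz2
      rw [List.mem_reverse] at hz1
      have : z = m := h3 z hz1 (List.mem_of_mem_tail hz2)
      subst this
      exact hm3 hz2
    by_cases hmu : m = u
    · right
      have := tpath_eq hG hWpath
      rw [← this, Walk.mem_support_append_iff]
      left
      rw [Walk.support_reverse, List.mem_reverse]
      exact hmu ▸ p2.start_mem_support
    · exfalso
      have hmY : m ∉ Y := hint m hmp hmu hmv
      have hmr : m ≠ rr := by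
        rintro rfl
        exact hmY hr
      -- three neighbours of m
      obtain ⟨n1, hn1a, hn1s, hn1m⟩ := exists_adj_of_ne p1.reverse hmu
      rw [Walk.support_reverse, List.mem_reverse] at hn1s
      obtain ⟨n2, hn2a, hn2s, hn2m⟩ := exists_adj_of_ne p2 hmv
      obtain ⟨n3, hn3a, hn3s, hn3m⟩ := exists_adj_of_ne p3 hmr
      have hn2t : n2 ∈ p2.support.tail := by
        rw [p2.support_eq_cons] at hn2s
        exact (List.mem_cons.mp hn2s).resolve_left hn2m
      have hn3t : n3 ∈ p3.support.tail := by
        rw [p3.support_eq_cons] at hn3s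
        exact (List.mem_cons.mp hn3s).resolve_left hn3m
      have hdisj12 : n1 ≠ n2 := by
        intro hEq
        have hnd := hp.support_nodup
        rw [h1, Walk.support_append] at hnd
        exact (List.nodup_append'.mp hnd).2.2 hn1s (hEq ▸ hn2t)
      have hdisj13 : n1 ≠ n3 := by
        intro hEq
        have hnd := hq.support_nodup
        rw [h2, Walk.support_append] at hnd
        exact (List.nodup_append'.mp hnd).2.2 hn1s (hEq ▸ hn3t)
      have hdisj23 : n2 ≠ n3 := by
        intro hEq
        exact hn2m (h3 n2 hn2s (hEq ▸ hn3s))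
      -- all three are Steiner vertices
      have hmS : m ∈ SteinerSet G X := steiner_path_closed hG (hYS hu) (hYS hv) m hmp
      have hn1S : n1 ∈ SteinerSet G X := steiner_path_closed hG (hYS hu) (hYS hv) n1
        (by show n1 ∈ p.support; rw [h1, Walk.mem_support_append_iff]; exact Or.inl hn1s)
      have hn2S : n2 ∈ SteinerSet G X := steiner_path_closed hG (hYS hu) (hYS hv) n2
        (by show n2 ∈ p.support
            rw [h1, Walk.mem_support_append_iff]
            exact Or.inr hn2s)
      have hn3S : n3 ∈ SteinerSet G X := steiner_path_closed hG (hYS hu) (hYS hr) n3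
        (by show n3 ∈ q.support
            rw [h2, Walk.mem_support_append_iff]
            exact Or.inr hn3s)
      -- hence m has Steiner degree ≥ 3, so m ∈ Y, contradiction
      apply hmY
      rw [hY]
      right
      refine ⟨hmS, ?_⟩
      have hsub : ({n1, n2, n3} : Set V) ⊆ {z | z ∈ SteinerSet G X ∧ G.Adj m z} := by
        rintro z (rfl | rfl | rfl)
        · exact ⟨hn1S, hn1a⟩
        · exact ⟨hn2S, hn2a⟩
        · exact ⟨hn3S, hn3a⟩
      have h3card : ({n1, n2, n3} : Set V).ncard = 3 :=
        Set.ncard_eq_three.mpr ⟨n1, n2, n3, hdisj12, hdisj13, hdisj23, rfl⟩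
      calc 3 = ({n1, n2, n3} : Set V).ncard := h3card.symm
        _ ≤ {z | z ∈ SteinerSet G X ∧ G.Adj m z}.ncard :=
            Set.ncard_le_ncard hsub (Set.toFinite _)

end Stmt12Aux2

section Stmt12Aux3

set_option linter.unusedSectionVars false

variable {V : Type} [DecidableEq V] {G : SimpleGraph V}

lemma lift_reachable {S : Set V} :
    ∀ {a b : V} (p : G.Walk a b), (∀ x ∈ p.support, x ∈ S) → ∀ (ha : a ∈ S) (hb : b ∈ S),
      (G.induce S).Reachable ⟨a, ha⟩ ⟨b, hb⟩ := by
  intro a b p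
  induction p with
  | nil => intro _ ha hb; exact Reachable.refl _
  | @cons a' w' b' h' p ih =>
    intro hp ha hb
    have hw : w' ∈ S := hp w' (by simp)
    have hadj : (G.induce S).Adj ⟨a', ha⟩ ⟨w', hw⟩ := by
      simp only [comap_adj, Function.Embedding.coe_subtype]
      exact h'
    exact hadj.reachable.trans (ih (fun x hx => hp x (by simp [hx])) hw hb)

lemma induced_tree (hG : G.IsTree) {X : Set V} (hXne : X.Nonempty) :
    (G.induce (SteinerSet G X)).IsTree := by
  rw [isTree_iff_existsUnique_path]
  constructor
  · obtain ⟨x, hx⟩ := hXne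
    exact ⟨⟨x, X_subset_steiner X hx⟩⟩
  · intro a b
    have hreach : (G.induce (SteinerSet G X)).Reachable a b := by
      have := lift_reachable (tpath hG ↑a ↑b)
        (steiner_path_closed hG a.2 b.2) a.2 b.2
      simpa using this
    obtain ⟨p0⟩ := hreach
    refine ⟨p0.bypass, p0.bypass_isPath, ?_⟩
    intro y hy
    have hinj : Function.Injective ((SimpleGraph.Embedding.induce (SteinerSet G X)
        (G := G)).toHom) := Subtype.val_injective
    have h1 : (y.map (SimpleGraph.Embedding.induce (SteinerSet G X)).toHom).IsPath :=
      Walk.map_isPath_of_injective hinj hy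
    have h2 : ((p0.bypass).map (SimpleGraph.Embedding.induce (SteinerSet G X)).toHom).IsPath :=
      Walk.map_isPath_of_injective hinj p0.bypass_isPath
    have := (hG.existsUnique_path ↑a ↑b).unique h1 h2
    exact Walk.map_injective_of_injective hinj _ _ this

lemma tree_handshake {W : Type} [Fintype W] [DecidableEq W] (H : SimpleGraph W)
    [DecidableRel H.Adj] (hH : H.IsTree) (h2 : 2 ≤ Fintype.card W) :
    (Finset.univ.filter fun w => 3 ≤ H.degree w).card + 2 ≤
      (Finset.univ.filter fun w => H.degree w = 1).card := by
  have hdeg : ∀ w : W, 1 ≤ H.degree w := by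
    intro w
    obtain ⟨w', hw'⟩ := Fintype.exists_ne_of_one_lt_card (by omega) w
    rw [Nat.one_le_iff_ne_zero, ← Nat.pos_iff_ne_zero, H.degree_pos_iff_exists_adj]
    obtain ⟨pw⟩ := hH.isConnected.preconnected w w'
    cases pw with
    | nil => exact absurd rfl hw'
    | cons h' _ => exact ⟨_, h'⟩
  have hsum := H.sum_degrees_eq_twice_card_edges
  have hcard := hH.card_edgeFinset
  have hsplit1 : ∑ w ∈ Finset.univ.filter (fun w => H.degree w = 1), H.degree w
      + ∑ w ∈ Finset.univ.filter (fun w => ¬ H.degree w = 1), H.degree w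
      = ∑ w, H.degree w :=
    Finset.sum_filter_add_sum_filter_not _ _ _
  have hsplit2 : ∑ w ∈ (Finset.univ.filter (fun w => ¬ H.degree w = 1)).filter
        (fun w => 3 ≤ H.degree w), H.degree w
      + ∑ w ∈ (Finset.univ.filter (fun w => ¬ H.degree w = 1)).filter
        (fun w => ¬ 3 ≤ H.degree w), H.degree w
      = ∑ w ∈ Finset.univ.filter (fun w => ¬ H.degree w = 1), H.degree w :=
    Finset.sum_filter_add_sum_filter_not _ _ _
  have hBeq : (Finset.univ.filter (fun w => ¬ H.degree w = 1)).filter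
      (fun w => 3 ≤ H.degree w) = Finset.univ.filter (fun w => 3 ≤ H.degree w) := by
    rw [Finset.filter_filter]
    apply Finset.filter_congr
    intro w _
    constructor
    · rintro ⟨_, h⟩; exact h
    · intro h; exact ⟨by omega, h⟩
  have hsumA : ∑ w ∈ Finset.univ.filter (fun w => H.degree w = 1), H.degree w
      = (Finset.univ.filter (fun w => H.degree w = 1)).card := by
    rw [Finset.sum_congr rfl (fun w hw => (Finset.mem_filter.mp hw).2)]
    simp
  have hsumB : 3 * (Finset.univ.filter (fun w => 3 ≤ H.degree w)).card
      ≤ ∑ w ∈ Finset.univ.filter (fun w => 3 ≤ H.degree w), H.degree w := by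
    have := Finset.card_nsmul_le_sum (Finset.univ.filter (fun w => 3 ≤ H.degree w))
      (fun w => H.degree w) 3 (fun w hw => (Finset.mem_filter.mp hw).2)
    simpa [mul_comm] using this
  have hsumC : 2 * ((Finset.univ.filter (fun w => ¬ H.degree w = 1)).filter
        (fun w => ¬ 3 ≤ H.degree w)).card
      ≤ ∑ w ∈ (Finset.univ.filter (fun w => ¬ H.degree w = 1)).filter
        (fun w => ¬ 3 ≤ H.degree w), H.degree w := by
    have := Finset.card_nsmul_le_sum ((Finset.univ.filter (fun w => ¬ H.degree w = 1)).filter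
        (fun w => ¬ 3 ≤ H.degree w)) (fun w => H.degree w) 2 ?_
    · simpa [mul_comm] using this
    · intro w hw
      rcases Finset.mem_filter.mp hw with ⟨hw1, hw2⟩
      rcases Finset.mem_filter.mp hw1 with ⟨-, hw3⟩
      have h4 := hdeg w
      show 2 ≤ H.degree w
      omega
  have hcards : (Finset.univ.filter (fun w => H.degree w = 1)).card
      + (Finset.univ.filter (fun w => ¬ H.degree w = 1)).card = Fintype.card W := by
    rw [← Finset.card_univ]
    exact Finset.card_filter_add_card_filter_not _
  have hcards2 : (Finset.univ.filter (fun w => 3 ≤ H.degree w)).card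
      + ((Finset.univ.filter (fun w => ¬ H.degree w = 1)).filter
        (fun w => ¬ 3 ≤ H.degree w)).card
      = (Finset.univ.filter (fun w => ¬ H.degree w = 1)).card := by
    rw [← hBeq]
    exact Finset.card_filter_add_card_filter_not _
  rw [hBeq] at hsplit2
  omega

end Stmt12Aux3
/-- With `c` `k`-up-modular, `X` picking one vertex per heavy
module w.r.t. `a`, `Y` adding the branching vertices of `T⟨X⟩`, and `Z` adding
one internal vertex for each pair of `Y`-vertices joined by a nonempty
`Y`-free path, we have `|Z| ≤ 4k − 3`. -/
theorem stmt12 {V : Type} [Fintype V] (G : SimpleGraph V) (hG : G.IsTree)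
    (c : V → ℝ) (hpos : ∀ v, 0 < c v)
    (k : ℕ) (hk : ∀ t : ℝ, 0 ≤ t → numHeavy G c t ≤ k)
    (a : ℝ) (ha : 0 < a)
    (hex : {H : Set V | IsHeavyModule G c a H}.Nonempty)
    (X : Set V)
    (hX1 : ∀ x ∈ X, ∃ H : Set V, IsHeavyModule G c a H ∧ x ∈ H)
    (hX2 : ∀ H : Set V, IsHeavyModule G c a H → ∃! x, x ∈ X ∧ x ∈ H)
    (Y : Set V)
    (hY : Y = X ∪ {v | v ∈ SteinerSet G X ∧
        3 ≤ {u | u ∈ SteinerSet G X ∧ G.Adj v u}.ncard})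
    (P : Set (V × V))
    (hP : P = {p | p.1 ∈ Y ∧ p.2 ∈ Y ∧ p.1 ≠ p.2 ∧
      ∀ q : G.Walk p.1 p.2, q.IsPath →
        (InternalOf G q ≠ [] ∧ ∀ w ∈ InternalOf G q, w ∉ Y)})
    (g : V × V → V)
    (hg : ∀ p ∈ P, ∀ q : G.Walk p.1 p.2, q.IsPath → g p ∈ InternalOf G q)
    (hgsym : ∀ p ∈ P, g p = g p.swap)
    (Z : Set V) (hZ : Z = Y ∪ g '' P) :
    Z.ncard ≤ 4 * k - 3 := by
  classical
  set Br := {v | v ∈ SteinerSet G X ∧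
      3 ≤ {u | u ∈ SteinerSet G X ∧ G.Adj v u}.ncard} with hBrdef
  -- a base point
  obtain ⟨H0, hH0⟩ := hex
  obtain ⟨x0, ⟨hx0X, hx0H⟩, -⟩ := hX2 H0 hH0
  have hx0Y : x0 ∈ Y := by rw [hY]; exact Or.inl hx0X
  -- k ≥ 1
  have hk1 : 1 ≤ k := by
    have h1 : 0 < numHeavy G c a :=
      (Set.ncard_pos (Set.toFinite _)).mpr ⟨H0, hH0⟩
    have h2 := hk a ha.le
    omega
  -- |X| ≤ k
  have hXk : X.ncard ≤ k := by
    choose φ hφ1 hφ2 using hX1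
    set f0 : V → Set V := fun x => if h : x ∈ X then φ x h else ∅ with hf0
    have hinj : Set.InjOn f0 X := by
      intro x1 h1 x2 h2 heq
      rw [hf0] at heq
      simp only [dif_pos h1, dif_pos h2] at heq
      obtain ⟨y, -, hy2⟩ := hX2 (φ x1 h1) (hφ1 x1 h1)
      have e1 := hy2 x1 ⟨h1, hφ2 x1 h1⟩
      have hx2mem : x2 ∈ φ x1 h1 := by rw [heq]; exact hφ2 x2 h2
      have e2 := hy2 x2 ⟨h2, hx2mem⟩
      exact e1.trans e2.symm
    have himg0 : f0 '' X ⊆ {H : Set V | IsHeavyModule G c a H} := by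
      rintro _ ⟨x, hx, rfl⟩
      show IsHeavyModule G c a (f0 x)
      rw [hf0]
      simp only [dif_pos hx]
      exact hφ1 x hx
    calc X.ncard = (f0 '' X).ncard := (Set.ncard_image_of_injOn hinj).symm
      _ ≤ {H : Set V | IsHeavyModule G c a H}.ncard :=
          Set.ncard_le_ncard himg0 (Set.toFinite _)
      _ ≤ k := hk a ha.le
  -- branching bound
  have hBr : Br.ncard = 0 ∨ Br.ncard + 2 ≤ X.ncard := by
    rcases Set.eq_empty_or_nonempty Br with hBre | ⟨v0, hv0⟩
    · left; rw [hBre]; exact Set.ncard_empty _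
    right
    haveI : Fintype ↥(SteinerSet G X) := Fintype.ofFinite _
    haveI : DecidableRel (G.induce (SteinerSet G X)).Adj := Classical.decRel _
    have htree := induced_tree hG (X := X) ⟨x0, hx0X⟩
    have hD1 : ∀ (v : V) (hv : v ∈ SteinerSet G X),
        {u | u ∈ SteinerSet G X ∧ G.Adj v u}.ncard
          = (G.induce (SteinerSet G X)).degree ⟨v, hv⟩ := by
      intro v hv
      have hset : {u | u ∈ SteinerSet G X ∧ G.Adj v u}
          = Subtype.val '' ((G.induce (SteinerSet G X)).neighborSet ⟨v, hv⟩) := by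
        ext u
        constructor
        · rintro ⟨huS, hadj⟩
          refine ⟨⟨u, huS⟩, ?_, rfl⟩
          show (G.induce (SteinerSet G X)).Adj ⟨v, hv⟩ ⟨u, huS⟩
          simp only [comap_adj, Function.Embedding.coe_subtype]
          exact hadj
        · rintro ⟨⟨u', hu'⟩, hadj, rfl⟩
          have : (G.induce (SteinerSet G X)).Adj ⟨v, hv⟩ ⟨u', hu'⟩ := hadj
          simp only [comap_adj, Function.Embedding.coe_subtype] at this
          exact ⟨hu', this⟩
      rw [hset, Set.ncard_image_of_injective _ Subtype.val_injective,
        ← card_neighborSet_eq_degree, Set.ncard_eq_toFinset_card', Set.toFinset_card]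
    obtain ⟨hv0S, hv0d⟩ := hv0
    have h2card : 2 ≤ Fintype.card ↥(SteinerSet G X) := by
      have hne : {u | u ∈ SteinerSet G X ∧ G.Adj v0 u}.Nonempty :=
        Set.nonempty_of_ncard_ne_zero (by omega)
      obtain ⟨u1, hu1S, hu1a⟩ := hne
      refine Fintype.one_lt_card_iff.mpr ⟨⟨v0, hv0S⟩, ⟨u1, hu1S⟩, ?_⟩
      simp only [ne_eq, Subtype.mk.injEq]
      exact hu1a.ne
    have hleaf : ∀ w : ↥(SteinerSet G X),
        (G.induce (SteinerSet G X)).degree w = 1 → (w : V) ∈ X := by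
      intro w hw1
      by_contra hwX
      obtain ⟨x1, hx1, x2, hx2, pa, hpa, hws⟩ := w.2
      have hwx1 : (w : V) ≠ x1 := fun h => hwX (h ▸ hx1)
      have hwx2 : (w : V) ≠ x2 := fun h => hwX (h ▸ hx2)
      obtain ⟨n1, hn1a, hn1s, hn1m⟩ :=
        exists_adj_of_ne (pa.takeUntil (w : V) hws).reverse hwx1
      obtain ⟨n2, hn2a, hn2s, hn2m⟩ :=
        exists_adj_of_ne (pa.dropUntil (w : V) hws) hwx2
      have hn1s' : n1 ∈ (pa.takeUntil (w : V) hws).support := by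
        rwa [Walk.support_reverse, List.mem_reverse] at hn1s
      have hn2t : n2 ∈ (pa.dropUntil (w : V) hws).support.tail := by
        rw [(pa.dropUntil (w : V) hws).support_eq_cons] at hn2s
        exact (List.mem_cons.mp hn2s).resolve_left hn2m
      have hne12 : n1 ≠ n2 := by
        intro hEq
        have hnd := hpa.support_nodup
        rw [← pa.take_spec hws, Walk.support_append] at hnd
        exact (List.nodup_append'.mp hnd).2.2 hn1s' (hEq ▸ hn2t)
      have hn1S : n1 ∈ SteinerSet G X :=
        ⟨x1, hx1, x2, hx2, pa, hpa, pa.support_takeUntil_subset hws hn1s'⟩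
      have hn2S : n2 ∈ SteinerSet G X :=
        ⟨x1, hx1, x2, hx2, pa, hpa,
          pa.support_dropUntil_subset hws (List.mem_of_mem_tail hn2t)⟩
      have h2le : 2 ≤ {u | u ∈ SteinerSet G X ∧ G.Adj (w : V) u}.ncard := by
        have hsub : ({n1, n2} : Set V) ⊆ {u | u ∈ SteinerSet G X ∧ G.Adj (w : V) u} := by
          rintro z (rfl | rfl)
          · exact ⟨hn1S, hn1a⟩
          · exact ⟨hn2S, hn2a⟩
        calc 2 = ({n1, n2} : Set V).ncard := (Set.ncard_pair hne12).symm
          _ ≤ _ := Set.ncard_le_ncard hsub (Set.toFinite _)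
      rw [hD1 (w : V) w.2] at h2le
      have h2le' : 2 ≤ (G.induce (SteinerSet G X)).degree w := h2le
      omega
    have hhs := tree_handshake (G.induce (SteinerSet G X)) htree h2card
    have hBrval : Br.ncard = (Finset.univ.filter
        (fun w : ↥(SteinerSet G X) => 3 ≤ (G.induce (SteinerSet G X)).degree w)).card := by
      have hBrim : Br = Subtype.val '' {w : ↥(SteinerSet G X) |
          3 ≤ (G.induce (SteinerSet G X)).degree w} := by
        ext v
        constructor
        · rintro ⟨hvS, hvd⟩
          refine ⟨⟨v, hvS⟩, ?_, rfl⟩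
          show 3 ≤ (G.induce (SteinerSet G X)).degree ⟨v, hvS⟩
          rw [← hD1 v hvS]
          exact hvd
        · rintro ⟨⟨v', hv'⟩, hvd, rfl⟩
          refine ⟨hv', ?_⟩
          rw [hD1 v' hv']
          exact hvd
      rw [hBrim, Set.ncard_image_of_injective _ Subtype.val_injective]
      have hcoe : {w : ↥(SteinerSet G X) | 3 ≤ (G.induce (SteinerSet G X)).degree w}
          = ↑(Finset.univ.filter (fun w : ↥(SteinerSet G X) =>
            3 ≤ (G.induce (SteinerSet G X)).degree w)) := by
        ext w; simp
      rw [hcoe, Set.ncard_coe_finset]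
    have hLfval : (Finset.univ.filter
        (fun w : ↥(SteinerSet G X) => (G.induce (SteinerSet G X)).degree w = 1)).card
        ≤ X.ncard := by
      set Lf := Finset.univ.filter
        (fun w : ↥(SteinerSet G X) => (G.induce (SteinerSet G X)).degree w = 1) with hLfdef
      have hsub : ((Lf.image Subtype.val : Finset V) : Set V) ⊆ X := by
        intro v hv
        simp only [Finset.coe_image, Set.mem_image, Finset.mem_coe, hLfdef,
          Finset.mem_filter] at hv
        obtain ⟨w, ⟨-, hw⟩, rfl⟩ := hv
        exact hleaf w hw
      calc Lf.card = (Lf.image Subtype.val).card :=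
            (Finset.card_image_of_injective _ Subtype.val_injective).symm
        _ = ((Lf.image Subtype.val : Finset V) : Set V).ncard :=
            (Set.ncard_coe_finset _).symm
        _ ≤ X.ncard := Set.ncard_le_ncard hsub (Set.toFinite _)
    omega
  -- the pair machinery
  have hQ : ∀ p ∈ P, ∀ w z : V, (w = p.1 ∧ z = p.2 ∨ w = p.2 ∧ z = p.1) →
      ∀ (q : G.Walk w z), q.IsPath → ∀ x ∈ q.support, x ≠ w → x ≠ z → x ∉ Y := by
    intro p hp w z hwz q hq x hx hxw hxz
    rw [hP] at hp
    obtain ⟨h1, h2, h3, h4⟩ := hp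
    rcases hwz with ⟨hw, hz⟩ | ⟨hw, hz⟩
    · subst hw; subst hz
      exact (h4 q hq).2 x (mem_internal hx hxw hxz)
    · subst hw; subst hz
      refine (h4 q.reverse hq.reverse).2 x (mem_internal ?_ hxz hxw)
      rwa [Walk.support_reverse, List.mem_reverse]
  have hmd : ∀ p ∈ P, p.2 ∈ (tpath hG p.1 x0).support ∨ p.1 ∈ (tpath hG p.2 x0).support := by
    intro p hp
    have hp' := hp
    rw [hP] at hp'
    obtain ⟨h1, h2, h3, h4⟩ := hp'
    refine md_lemma hG X Y hY h1 h2 hx0Y h3 ?_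
    intro x hx hxu hxv
    exact hQ p hp p.1 p.2 (Or.inl ⟨rfl, rfl⟩) _ (tpath_isPath hG p.1 p.2) x hx hxu hxv
  set f : V × V → V := fun p => if p.2 ∈ (tpath hG p.1 x0).support then p.1 else p.2 with hfdef
  have hf1 : ∀ p ∈ P, f p ∈ Y \ {x0} := by
    intro p hp
    have hp' := hp
    rw [hP] at hp'
    obtain ⟨h1, h2, h3, -⟩ := hp'
    by_cases hc : p.2 ∈ (tpath hG p.1 x0).support
    · have hfp : f p = p.1 := by rw [hfdef]; exact if_pos hc
      rw [hfp]
      refine ⟨h1, ?_⟩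
      intro hx
      rw [Set.mem_singleton_iff] at hx
      have hnil : tpath hG x0 x0 = Walk.nil := (tpath_eq hG Walk.IsPath.nil).symm
      rw [hx, hnil] at hc
      simp only [Walk.support_nil, List.mem_singleton] at hc
      exact h3 (hx.trans hc.symm)
    · have hfp : f p = p.2 := by rw [hfdef]; exact if_neg hc
      rw [hfp]
      refine ⟨h2, ?_⟩
      intro hx
      rw [Set.mem_singleton_iff] at hx
      apply hc
      rw [hx]
      exact Walk.end_mem_support _
  have hclaim : ∀ p ∈ P, ∃ o : V, (p = (f p, o) ∨ p = (o, f p)) ∧ o ∈ Y ∧ o ≠ f p ∧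
      o ∈ (tpath hG (f p) x0).support := by
    intro p hp
    have hp' := hp
    rw [hP] at hp'
    obtain ⟨h1, h2, h3, -⟩ := hp'
    by_cases hc : p.2 ∈ (tpath hG p.1 x0).support
    · have hfp : f p = p.1 := by rw [hfdef]; exact if_pos hc
      refine ⟨p.2, Or.inl ?_, h2, ?_, ?_⟩
      · rw [hfp]
      · rw [hfp]; exact Ne.symm h3
      · rw [hfp]; exact hc
    · have hfp : f p = p.2 := by rw [hfdef]; exact if_neg hc
      have hres := (hmd p hp).resolve_left hc
      refine ⟨p.1, Or.inr ?_, h1, ?_, ?_⟩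
      · rw [hfp]
      · rw [hfp]; exact h3
      · rw [hfp]; exact hres
  have hf2 : ∀ p1 ∈ P, ∀ p2 ∈ P, f p1 = f p2 → p1 = p2 ∨ p1 = p2.swap := by
    intro p1 hp1 p2 hp2 hff
    obtain ⟨o1, ho1e, ho1Y, ho1ne, ho1s⟩ := hclaim p1 hp1
    obtain ⟨o2, ho2e, ho2Y, ho2ne, ho2s⟩ := hclaim p2 hp2
    rw [← hff] at ho2e ho2ne ho2s
    have hoeq : o1 = o2 := by
      by_contra hne
      rcases comp_aux hG (tpath hG (f p1) x0) (tpath_isPath hG (f p1) x0) ho1s ho2s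
        with hcc | hcc
      · have hor : f p1 = p2.1 ∧ o2 = p2.2 ∨ f p1 = p2.2 ∧ o2 = p2.1 := by
          rcases ho2e with h | h
          · exact Or.inl ⟨(congrArg Prod.fst h).symm, (congrArg Prod.snd h).symm⟩
          · exact Or.inr ⟨(congrArg Prod.snd h).symm, (congrArg Prod.fst h).symm⟩
        exact hQ p2 hp2 (f p1) o2 hor ((tpath hG (f p1) x0).takeUntil o2 ho2s)
          ((tpath_isPath hG (f p1) x0).takeUntil ho2s) o1 hcc ho1ne hne ho1Y
      · have hor : f p1 = p1.1 ∧ o1 = p1.2 ∨ f p1 = p1.2 ∧ o1 = p1.1 := by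
          rcases ho1e with h | h
          · exact Or.inl ⟨(congrArg Prod.fst h).symm, (congrArg Prod.snd h).symm⟩
          · exact Or.inr ⟨(congrArg Prod.snd h).symm, (congrArg Prod.fst h).symm⟩
        exact hQ p1 hp1 (f p1) o1 hor ((tpath hG (f p1) x0).takeUntil o1 ho1s)
          ((tpath_isPath hG (f p1) x0).takeUntil ho1s) o2 hcc ho2ne (Ne.symm hne) ho2Y
    subst hoeq
    rcases ho1e with h1 | h1 <;> rcases ho2e with h2 | h2
    · left; rw [h1, h2]
    · right; rw [h1, h2]; rfl
    · right; rw [h1, h2]; rfl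
    · left; rw [h1, h2]
  -- counting the image of g
  have himg : (g '' P).ncard ≤ (Y \ {x0}).ncard := by
    set ψ : V → V × V := fun z => if h : ∃ p ∈ P, g p = z then h.choose else (x0, x0)
      with hψdef
    have hψ : ∀ z ∈ g '' P, ψ z ∈ P ∧ g (ψ z) = z := by
      intro z hz
      obtain ⟨p, hp, hgp⟩ := hz
      have hcond : ∃ p' ∈ P, g p' = z := ⟨p, hp, hgp⟩
      rw [hψdef]
      simp only [dif_pos hcond]
      exact ⟨hcond.choose_spec.1, hcond.choose_spec.2⟩
    apply Set.ncard_le_ncard_of_injOn (fun z => f (ψ z))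
    · intro z hz
      exact hf1 (ψ z) (hψ z hz).1
    · intro z1 hz1 z2 hz2 heq
      obtain ⟨hP1, hg1⟩ := hψ z1 hz1
      obtain ⟨hP2, hg2⟩ := hψ z2 hz2
      rcases hf2 _ hP1 _ hP2 heq with h | h
      · rw [← hg1, ← hg2, h]
      · rw [← hg1, ← hg2, h, ← hgsym _ hP2]
  have hZle : Z.ncard ≤ Y.ncard + (g '' P).ncard := by
    rw [hZ]; exact Set.ncard_union_le _ _
  have hYx0 : (Y \ {x0}).ncard = Y.ncard - 1 :=
    Set.ncard_diff_singleton_of_mem hx0Y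
  have hY1 : 1 ≤ Y.ncard := (Set.ncard_pos (Set.toFinite _)).mpr ⟨x0, hx0Y⟩
  have hYle : Y.ncard ≤ X.ncard + Br.ncard := by
    rw [hY]; exact Set.ncard_union_le _ _
  omega
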